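/- (Pointwise Schwarz inequality at a maximum point) Let λ, μ : Ω → ℝ be positive functions on an open set Ω ⊆ ℂ, twice differentiable at w₀ ∈ Ω, such that u = λ/μ attains a local maximum at w₀. Suppose the Gaussian curvatures K_λ = -(1/(4λ))Δ log λ and K_μ = -(1/(4μ))Δ log μ satisfy K_λ(w₀) ≤ -k_C < 0 and K_μ(w₀) ≥ -k_R with k_C, k_R > 0. Then u(w₀) ≤ k_R/k_C. -/

import Mathlib

/-- The Laplacian of a function `f : ℂ → ℝ` at a point, as the trace of the
second derivative in the directions `1` and `i`. -/
noncomputable def laplacianAt (f : ℂ → ℝ) (w : ℂ) : ℝ :=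
  iteratedFDeriv ℝ 2 f w ![1, 1] + iteratedFDeriv ℝ 2 f w ![Complex.I, Complex.I]


open Filter Topology

/-- Second directional derivative is nonpositive at a local max of a C² function. -/
lemma snd_deriv_nonpos_of_isLocalMax {f : ℂ → ℝ} {x : ℂ}
    (hf : ContDiffAt ℝ 2 f x) (hmax : IsLocalMax f x) (v : ℂ) :
    fderiv ℝ (fderiv ℝ f) x v v ≤ 0 := by
  by_contra hcon
  push_neg at hcon
  set c : ℝ := fderiv ℝ (fderiv ℝ f) x v v with hc
  obtain ⟨U, hUnhds, hfU⟩ := hf.contDiffOn (le_refl 2) (by simp)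
  obtain ⟨U', hU'U, hU'o, hxU'⟩ := mem_nhds_iff.mp hUnhds
  set L : ℝ → ℂ := fun t => x + t • v with hLdef
  have hL0 : L 0 = x := by simp [hLdef]
  have hLder : ∀ t : ℝ, HasDerivAt L v t := by
    intro t
    have h1 : HasDerivAt (fun t : ℝ => t • v) ((1:ℝ) • v) t :=
      (hasDerivAt_id t).smul_const v
    simpa [hLdef, one_smul] using h1.const_add x
  have hLcont : Continuous L := by fun_prop
  have hfdiff : ∀ w ∈ U', DifferentiableAt ℝ f w := fun w hw =>
    ((hfU w (hU'U hw)).contDiffAt (mem_nhds_iff.mpr ⟨U', hU'U, hU'o, hw⟩)).differentiableAt two_ne_zero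
  have hg : ∀ t : ℝ, L t ∈ U' → HasDerivAt (f ∘ L) (fderiv ℝ f (L t) v) t := by
    intro t ht
    exact ((hfdiff (L t) ht).hasFDerivAt).comp_hasDerivAt t (hLder t)
  have hfd2 : DifferentiableAt ℝ (fderiv ℝ f) x :=
    (hf.fderiv_right (m := 1) (by norm_num)).differentiableAt one_ne_zero
  set g1 : ℝ → ℝ := fun t => fderiv ℝ f (L t) v with hg1def
  have hg1der : HasDerivAt g1 c 0 := by
    have h1 : HasDerivAt (fun t => fderiv ℝ f (L t)) (fderiv ℝ (fderiv ℝ f) x v) 0 := by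
      have hfd2' : HasFDerivAt (fderiv ℝ f) (fderiv ℝ (fderiv ℝ f) x) (L 0) :=
        hL0 ▸ hfd2.hasFDerivAt
      exact hfd2'.comp_hasDerivAt 0 (hLder 0)
    have h2 := h1.clm_apply (hasDerivAt_const (0:ℝ) v)
    simpa [hL0] using h2
  have hg1zero : g1 0 = 0 := by
    simp [hg1def, hL0, hmax.fderiv_eq_zero]
  have hslope : Tendsto (slope g1 0) (𝓝[≠] (0:ℝ)) (𝓝 c) :=
    hasDerivAt_iff_tendsto_slope.mp hg1der
  have hev : ∀ᶠ t in 𝓝[>] (0:ℝ), 0 < slope g1 0 t :=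
    (hslope.mono_left (nhdsWithin_mono 0 (fun t ht => ne_of_gt ht))).eventually
      (eventually_gt_nhds hcon)
  have hten : Tendsto L (𝓝 0) (𝓝 x) := by
    rw [← hL0]; exact hLcont.continuousAt
  have hUL : ∀ᶠ t in 𝓝 (0:ℝ), L t ∈ U' := hten.eventually (hU'o.mem_nhds hxU')
  have hmaxL : ∀ᶠ t in 𝓝 (0:ℝ), f (L t) ≤ f x := hten.eventually hmax
  have hall : ∀ᶠ t in 𝓝[>] (0:ℝ),
      0 < slope g1 0 t ∧ L t ∈ U' ∧ f (L t) ≤ f x :=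
    hev.and ((hUL.and hmaxL).filter_mono nhdsWithin_le_nhds)
  obtain ⟨δ, hδ, hIoc⟩ := mem_nhdsGT_iff_exists_Ioc_subset.mp hall
  rw [Set.mem_Ioi] at hδ
  have hmem : ∀ t ∈ Set.Icc (0:ℝ) δ, L t ∈ U' := by
    intro t ht
    rcases eq_or_lt_of_le ht.1 with h0 | h0
    · rw [← h0, hL0]; exact hxU'
    · exact (hIoc ⟨h0, ht.2⟩).2.1
  have hg1pos : ∀ t ∈ Set.Ioo (0:ℝ) δ, 0 < g1 t := by
    intro t ht
    have hs := (hIoc ⟨ht.1, ht.2.le⟩).1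
    have heq : slope g1 0 t = g1 t / t := by simp [slope, hg1zero, inv_mul_eq_div]
    rw [heq] at hs
    rcases div_pos_iff.mp hs with ⟨h1, _⟩ | ⟨_, h2⟩
    · exact h1
    · linarith [ht.1]
  have hmono : StrictMonoOn (f ∘ L) (Set.Icc 0 δ) := by
    apply strictMonoOn_of_deriv_pos (convex_Icc 0 δ)
    · intro t ht
      exact ((hg t (hmem t ht)).continuousAt).continuousWithinAt
    · intro t ht
      rw [interior_Icc] at ht
      have hd := hg t (hmem t ⟨ht.1.le, ht.2.le⟩)
      rw [hd.deriv]
      exact hg1pos t ht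
  have h1 : (f ∘ L) 0 < (f ∘ L) δ :=
    hmono (Set.left_mem_Icc.mpr hδ.le) (Set.right_mem_Icc.mpr hδ.le) hδ
  have h2 : f (L δ) ≤ f x := (hIoc ⟨hδ, le_refl δ⟩).2.2
  rw [Function.comp, Function.comp, hL0] at h1
  linarith

/-- Second derivative of a difference, pointwise, under local C² assumptions. -/
lemma snd_fderiv_sub {f g : ℂ → ℝ} {x : ℂ}
    (hf : ContDiffAt ℝ 2 f x) (hg : ContDiffAt ℝ 2 g x) (v : ℂ) :
    fderiv ℝ (fderiv ℝ (fun w => f w - g w)) x v v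
      = fderiv ℝ (fderiv ℝ f) x v v - fderiv ℝ (fderiv ℝ g) x v v := by
  have heq : fderiv ℝ (fun w => f w - g w) =ᶠ[𝓝 x]
      fun w => fderiv ℝ f w - fderiv ℝ g w := by
    filter_upwards [hf.eventually (by simp), hg.eventually (by simp)] with w h1 h2
    exact fderiv_fun_sub (h1.differentiableAt two_ne_zero) (h2.differentiableAt two_ne_zero)
  have hdf : DifferentiableAt ℝ (fderiv ℝ f) x :=
    (hf.fderiv_right (m := 1) (by norm_num)).differentiableAt one_ne_zero
  have hdg : DifferentiableAt ℝ (fderiv ℝ g) x :=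
    (hg.fderiv_right (m := 1) (by norm_num)).differentiableAt one_ne_zero
  rw [heq.fderiv_eq, fderiv_fun_sub hdf hdg]
  simp

lemma laplacianAt_eq (f : ℂ → ℝ) (w : ℂ) :
    laplacianAt f w
      = fderiv ℝ (fderiv ℝ f) w 1 1 + fderiv ℝ (fderiv ℝ f) w Complex.I Complex.I := by
  rw [laplacianAt, iteratedFDeriv_two_apply, iteratedFDeriv_two_apply]
  simp

/-- Pointwise Schwarz inequality at a maximum point: if `u = λ/μ` attains a local maximum
at `w₀`, the Gaussian curvature of `λ` at `w₀` is `≤ -k_C < 0` and that of `μ` is `≥ -k_R`,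
then `u(w₀) ≤ k_R/k_C`. -/
theorem pointwise_schwarz_at_max (Ω : Set ℂ) (hΩ : IsOpen Ω)
    (lam mu : ℂ → ℝ) (w₀ : ℂ) (hw₀ : w₀ ∈ Ω)
    (hlam_pos : ∀ w ∈ Ω, 0 < lam w) (hmu_pos : ∀ w ∈ Ω, 0 < mu w)
    (hlam : ContDiffAt ℝ 2 (fun w => Real.log (lam w)) w₀)
    (hmu : ContDiffAt ℝ 2 (fun w => Real.log (mu w)) w₀)
    (hmax : IsLocalMaxOn (fun w => lam w / mu w) Ω w₀)
    (kC kR : ℝ) (hkC : 0 < kC) (hkR : 0 < kR)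
    (hcurvLam : -(1 / (4 * lam w₀)) * laplacianAt (fun w => Real.log (lam w)) w₀ ≤ -kC)
    (hcurvMu : -(1 / (4 * mu w₀)) * laplacianAt (fun w => Real.log (mu w)) w₀ ≥ -kR) :
    lam w₀ / mu w₀ ≤ kR / kC := by
  have hl := hlam_pos w₀ hw₀
  have hm := hmu_pos w₀ hw₀
  have hΩn : Ω ∈ 𝓝 w₀ := hΩ.mem_nhds hw₀
  have hmax' : IsLocalMax (fun w => lam w / mu w) w₀ := by
    rwa [IsLocalMaxOn, IsMaxFilter, nhdsWithin_eq_nhds.mpr hΩn] at hmax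
  -- the log of the quotient has a local max
  have hmaxh : IsLocalMax (fun w => Real.log (lam w) - Real.log (mu w)) w₀ := by
    filter_upwards [hmax', hΩn] with w hw hwΩ
    have hposw : 0 < lam w / mu w := div_pos (hlam_pos w hwΩ) (hmu_pos w hwΩ)
    have hpos0 : 0 < lam w₀ / mu w₀ := div_pos hl hm
    have hlog : Real.log (lam w / mu w) ≤ Real.log (lam w₀ / mu w₀) :=
      (Real.log_le_log_iff hposw hpos0).mpr hw
    rwa [Real.log_div (ne_of_gt (hlam_pos w hwΩ)) (ne_of_gt (hmu_pos w hwΩ)),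
      Real.log_div (ne_of_gt hl) (ne_of_gt hm)] at hlog
  -- second derivative inequality in each direction
  have hkey : ∀ v : ℂ,
      fderiv ℝ (fderiv ℝ (fun w => Real.log (lam w))) w₀ v v
        ≤ fderiv ℝ (fderiv ℝ (fun w => Real.log (mu w))) w₀ v v := by
    intro v
    have h1 := snd_deriv_nonpos_of_isLocalMax (hlam.sub hmu) hmaxh v
    have h2 := snd_fderiv_sub hlam hmu v
    rw [h2] at h1
    linarith
  have hLap : laplacianAt (fun w => Real.log (lam w)) w₀
      ≤ laplacianAt (fun w => Real.log (mu w)) w₀ := by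
    rw [laplacianAt_eq, laplacianAt_eq]
    have := hkey 1
    have := hkey Complex.I
    linarith
  -- arithmetic
  set L1 := laplacianAt (fun w => Real.log (lam w)) w₀ with hL1
  set L2 := laplacianAt (fun w => Real.log (mu w)) w₀ with hL2
  have h4l : (0:ℝ) < 4 * lam w₀ := by positivity
  have h4m : (0:ℝ) < 4 * mu w₀ := by positivity
  have h1 : 4 * lam w₀ * kC ≤ L1 := by
    have h5 : kC ≤ 1 / (4 * lam w₀) * L1 := by linarith
    calc 4 * lam w₀ * kC ≤ 4 * lam w₀ * (1 / (4 * lam w₀) * L1) :=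
          mul_le_mul_of_nonneg_left h5 h4l.le
      _ = L1 := by field_simp
  have h2 : L2 ≤ 4 * mu w₀ * kR := by
    have h5 : 1 / (4 * mu w₀) * L2 ≤ kR := by linarith
    calc L2 = 4 * mu w₀ * (1 / (4 * mu w₀) * L2) := by field_simp
      _ ≤ 4 * mu w₀ * kR := mul_le_mul_of_nonneg_left h5 h4m.le
  rw [div_le_div_iff₀ hm hkC]
  nlinarith
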